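/- Let Ψ_{d,e}(s,q,k) := (d μ(d) μ(e) / (φ(d) e)) ∏_{p | eq/d} { (1 − p^{−s})^k ∑_{ν≥0} d_k(p^{ν+ν_p(eq/d)}) p^{−νs} }, where the product is over primes p dividing eq/d. Then for all s with Re s > 1/2 and for e | d | q, one has Ψ_{d,e}(s,q,k) ≪_{k,ε} q^{ε/2}. -/

import Mathlib

/-- The generalized divisor function `d_k`, the `k`-fold Dirichlet convolution of `1`. -/
noncomputable def dk (k n : ℕ) : ℕ := (ArithmeticFunction.zeta ^ k) n

/-- The local factor `Ψ_{d,e}(s,q,k)` of the Conrey–Gonek singular series: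
`Ψ_{d,e}(s,q,k) = (d μ(d) μ(e) / (φ(d) e)) ∏_{p ∣ eq/d} (1 - p^{-s})^k
  ∑_{ν ≥ 0} d_k(p^{ν + ν_p(eq/d)}) p^{-νs}`. -/
noncomputable def Psi (k q d e : ℕ) (s : ℂ) : ℂ :=
  ((d : ℂ) * (ArithmeticFunction.moebius d : ℤ) * (ArithmeticFunction.moebius e : ℤ)) /
      ((Nat.totient d : ℂ) * (e : ℂ)) *
    ∏ p ∈ (e * q / d).primeFactors,
      ((1 - (p : ℂ) ^ (-s)) ^ k *
        ∑' ν : ℕ, (dk k (p ^ (ν + (e * q / d).factorization p)) : ℂ) / (p : ℂ) ^ ((ν : ℂ) * s))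

lemma dk_prime_pow_le (k : ℕ) {p : ℕ} (hp : p.Prime) (m : ℕ) :
    dk k (p ^ m) ≤ (m + 1) ^ k := by
  induction k generalizing m with
  | zero =>
    simp only [dk, pow_zero]
    rcases eq_or_ne (p ^ m) 1 with h | h
    · simp [h]
    · simp [ArithmeticFunction.one_apply_ne h]
  | succ k ih =>
    have : dk (k+1) (p ^ m) = ∑ j ∈ Finset.range (m+1), dk k (p ^ j) := by
      simp only [dk, pow_succ]
      rw [ArithmeticFunction.mul_zeta_apply, Nat.sum_divisors_prime_pow hp]
    rw [this]
    calc ∑ j ∈ Finset.range (m+1), dk k (p ^ j)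
        ≤ ∑ j ∈ Finset.range (m+1), (m+1)^k := by
          refine Finset.sum_le_sum fun j hj => ?_
          have hj' := Finset.mem_range.mp hj
          exact le_trans (ih j) (Nat.pow_le_pow_left (by omega) k)
      _ = (m+1) * (m+1)^k := by simp [Finset.sum_const, mul_comm]
      _ = (m+1)^(k+1) := by ring

/-- `A^{ω(n)} ≤ C n^δ`. -/
lemma omega_bound (A δ : ℝ) (hA : 1 ≤ A) (hδ : 0 < δ) :
    ∃ C : ℝ, 1 ≤ C ∧ ∀ n : ℕ, 0 < n → A ^ n.primeFactors.card ≤ C * (n : ℝ) ^ δ := by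
  obtain ⟨T, hT⟩ := pow_unbounded_of_one_lt (A ^ (1/δ)) (by norm_num : (1:ℝ) < 2)
  refine ⟨A ^ (2^T), one_le_pow₀ hA, fun n hn => ?_⟩
  have hA0 : (0:ℝ) < A := lt_of_lt_of_le one_pos hA
  have key : ∀ p : ℕ, p ∈ n.primeFactors → 2^T ≤ p → A ≤ (p:ℝ) ^ δ := by
    intro p hp hTp
    have h2 : (2:ℝ) ^ T ≤ (p:ℝ) := by exact_mod_cast hTp
    have : A ^ ((1:ℝ)/δ) ≤ (p:ℝ) := le_trans (le_of_lt (by exact_mod_cast hT)) h2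
    have := Real.rpow_le_rpow (by positivity) this (le_of_lt hδ)
    rwa [← Real.rpow_mul hA0.le, one_div, inv_mul_cancel₀ hδ.ne', Real.rpow_one] at this
  classical
  have hsplit : A ^ n.primeFactors.card
      = (∏ p ∈ n.primeFactors.filter (fun p => p < 2^T), A) *
        (∏ p ∈ n.primeFactors.filter (fun p => ¬ p < 2^T), A) := by
    rw [Finset.prod_const, Finset.prod_const, ← pow_add,
      Finset.card_filter_add_card_filter_not]
  rw [hsplit]
  have h1 : (∏ p ∈ n.primeFactors.filter (fun p => p < 2^T), A) ≤ A ^ (2^T) := by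
    rw [Finset.prod_const]
    apply pow_le_pow_right₀ hA
    calc (n.primeFactors.filter (fun p => p < 2^T)).card
        ≤ (Finset.range (2^T)).card := by
          apply Finset.card_le_card
          intro p hp
          rw [Finset.mem_filter] at hp
          exact Finset.mem_range.mpr hp.2
      _ = 2^T := Finset.card_range _
  have h2 : (∏ p ∈ n.primeFactors.filter (fun p => ¬ p < 2^T), A) ≤ (n:ℝ) ^ δ := by
    calc (∏ p ∈ n.primeFactors.filter (fun p => ¬ p < 2^T), A)
        ≤ ∏ p ∈ n.primeFactors.filter (fun p => ¬ p < 2^T), (p:ℝ) ^ δ := by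
          refine Finset.prod_le_prod (fun _ _ => hA0.le) fun p hp => ?_
          rw [Finset.mem_filter, not_lt] at hp
          exact key p hp.1 hp.2
      _ = ((∏ p ∈ n.primeFactors.filter (fun p => ¬ p < 2^T), (p:ℝ)) : ℝ) ^ δ := by
          rw [← Real.finset_prod_rpow _ _ (fun p _ => by positivity)]
      _ ≤ (n:ℝ) ^ δ := by
          apply Real.rpow_le_rpow (Finset.prod_nonneg fun p _ => by positivity) _ hδ.le
          have hd : (∏ p ∈ n.primeFactors.filter (fun p => ¬ p < 2^T), p) ∣ n := by
            refine dvd_trans (Finset.prod_dvd_prod_of_subset _ _ _ (Finset.filter_subset _ _))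
              (Nat.prod_primeFactors_dvd n)
          rw [← Nat.cast_prod]
          exact_mod_cast Nat.le_of_dvd hn hd
  exact mul_le_mul h1 h2 (Finset.prod_nonneg fun _ _ => hA0.le) (by positivity)

lemma geom_summable (k : ℕ) (r : ℝ) (h0 : 0 ≤ r) (h1 : r < 1) :
    Summable (fun n : ℕ => ((n : ℝ) + 1) ^ k * r ^ n) := by
  have h := summable_pow_mul_geometric_of_norm_lt_one (R := ℝ) k
    (by rwa [Real.norm_eq_abs, abs_of_nonneg h0] : ‖r‖ < 1)
  have hs : Summable (fun n : ℕ => ((n + 1 : ℕ) : ℝ) ^ k * r ^ (n + 1)) :=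
    (summable_nat_add_iff 1).mpr h
  rcases eq_or_lt_of_le h0 with rfl | hr0
  · apply summable_of_ne_finset_zero (s := {0})
    intro n hn
    have : n ≠ 0 := by simpa using hn
    simp [zero_pow this]
  · have := hs.mul_left r⁻¹
    refine this.congr fun n => ?_
    push_cast
    rw [pow_succ]
    field_simp

lemma poly_bound (k : ℕ) (δ : ℝ) (hδ : 0 < δ) :
    ∃ C : ℝ, 1 ≤ C ∧ ∀ a : ℕ, ((a : ℝ) + 1) ^ k ≤ C * (2 : ℝ) ^ (δ * a) := by
  set r : ℝ := (2 : ℝ) ^ (-δ) with hr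
  have hr0 : 0 < r := Real.rpow_pos_of_pos two_pos _
  have hr1 : r < 1 := by
    rw [hr]
    exact Real.rpow_lt_one_of_one_lt_of_neg one_lt_two (neg_neg_iff_pos.mpr hδ)
  have hs := geom_summable k r hr0.le hr1
  set B : ℝ := ∑' n : ℕ, ((n : ℝ) + 1) ^ k * r ^ n with hB
  have hB1 : 1 ≤ B := by
    have := Summable.le_tsum hs 0 (fun n _ => by positivity)
    simpa using this
  refine ⟨B, hB1, fun a => ?_⟩
  have hterm : ((a : ℝ) + 1) ^ k * r ^ a ≤ B := Summable.le_tsum hs a (fun n _ => by positivity)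
  have hrpow : r ^ a = ((2:ℝ) ^ (δ * a))⁻¹ := by
    rw [hr, ← Real.rpow_natCast ((2:ℝ)^(-δ)) a, ← Real.rpow_mul (by norm_num),
      ← Real.rpow_neg (by norm_num)]
    ring_nf
  rw [hrpow] at hterm
  have h2 : (0:ℝ) < (2:ℝ) ^ (δ * a) := Real.rpow_pos_of_pos two_pos _
  calc ((a : ℝ) + 1) ^ k = (((a : ℝ) + 1) ^ k * ((2:ℝ) ^ (δ * a))⁻¹) * (2:ℝ) ^ (δ * a) := by
        field_simp
    _ ≤ B * (2:ℝ) ^ (δ * a) := by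
        apply mul_le_mul_of_nonneg_right hterm h2.le

noncomputable def rr : ℝ := (2 : ℝ) ^ (-(1/2) : ℝ)

lemma rr_pos : 0 < rr := Real.rpow_pos_of_pos two_pos _
lemma rr_lt_one : rr < 1 :=
  Real.rpow_lt_one_of_one_lt_of_neg one_lt_two (by norm_num)

noncomputable def Bk (k : ℕ) : ℝ := ∑' n : ℕ, ((n : ℝ) + 1) ^ k * rr ^ n

lemma Bk_summable (k : ℕ) : Summable (fun n : ℕ => ((n : ℝ) + 1) ^ k * rr ^ n) :=
  geom_summable k rr rr_pos.le rr_lt_one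

lemma one_le_Bk (k : ℕ) : 1 ≤ Bk k := by
  have := Summable.le_tsum (Bk_summable k) 0 (fun n _ => by have := rr_pos; positivity)
  simpa [Bk] using this

lemma tsum_factor_bound (k a : ℕ) {p : ℕ} (hp : p.Prime) {s : ℂ} (hs : 1/2 < s.re) :
    ‖∑' ν : ℕ, (dk k (p ^ (ν + a)) : ℂ) / (p : ℂ) ^ ((ν : ℂ) * s)‖ ≤
      ((a : ℝ) + 1) ^ k * Bk k := by
  have hp2 : (2:ℝ) ≤ (p:ℝ) := by exact_mod_cast hp.two_le
  have hp0 : (0:ℕ) < p := hp.pos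
  have hσ : (0:ℝ) < s.re := lt_trans (by norm_num) hs
  have hg : HasSum (fun ν : ℕ => ((a:ℝ)+1)^k * (((ν:ℝ)+1)^k * rr ^ ν))
      (((a:ℝ)+1)^k * Bk k) := (Bk_summable k).hasSum.mul_left _
  refine tsum_of_norm_bounded hg fun ν => ?_
  have hden : ‖(p : ℂ) ^ ((ν : ℂ) * s)‖ = (p:ℝ) ^ ((ν:ℝ) * s.re) := by
    rw [Complex.norm_natCast_cpow_of_pos hp0]
    norm_num
  have hden_pos : (0:ℝ) < (p:ℝ) ^ ((ν:ℝ) * s.re) := Real.rpow_pos_of_pos (by positivity) _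
  rw [norm_div, hden, Complex.norm_natCast]
  have hnum : (dk k (p ^ (ν + a)) : ℝ) ≤ ((a:ℝ)+1)^k * ((ν:ℝ)+1)^k := by
    have h1 : (dk k (p ^ (ν + a)) : ℝ) ≤ ((ν + a : ℕ) + 1 : ℕ)^k := by
      exact_mod_cast dk_prime_pow_le k hp (ν + a)
    refine h1.trans ?_
    rw [← mul_pow]
    apply pow_le_pow_left₀ (by positivity)
    push_cast; nlinarith [Nat.cast_nonneg (α := ℝ) ν, Nat.cast_nonneg (α := ℝ) a]
  have hinv : ((p:ℝ) ^ ((ν:ℝ) * s.re))⁻¹ ≤ rr ^ ν := by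
    have h2 : rr ^ ν = (((2:ℝ) ^ ((1:ℝ)/2)) ^ ν)⁻¹ := by
      rw [rr, ← Real.rpow_natCast ((2:ℝ)^(-(1/2):ℝ)) ν, ← Real.rpow_natCast ((2:ℝ)^((1:ℝ)/2)) ν,
        ← Real.rpow_mul (by norm_num), ← Real.rpow_mul (by norm_num),
        ← Real.rpow_neg (by norm_num)]
      ring_nf
    rw [h2]
    apply inv_anti₀ (by positivity)
    calc ((2:ℝ) ^ ((1:ℝ)/2)) ^ ν = (2:ℝ) ^ (((ν:ℝ)) * (1/2)) := by
          rw [← Real.rpow_natCast ((2:ℝ)^((1:ℝ)/2)) ν, ← Real.rpow_mul (by norm_num)]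
          ring_nf
      _ ≤ (2:ℝ) ^ ((ν:ℝ) * s.re) := by
          apply Real.rpow_le_rpow_of_exponent_le one_le_two
          have : (0:ℝ) ≤ (ν:ℝ) := Nat.cast_nonneg ν
          nlinarith
      _ ≤ (p:ℝ) ^ ((ν:ℝ) * s.re) := by
          apply Real.rpow_le_rpow (by norm_num) hp2 (by positivity)
  calc (dk k (p ^ (ν + a)) : ℝ) / (p:ℝ) ^ ((ν:ℝ) * s.re)
      = (dk k (p ^ (ν + a)) : ℝ) * ((p:ℝ) ^ ((ν:ℝ) * s.re))⁻¹ := div_eq_mul_inv _ _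
    _ ≤ (((a:ℝ)+1)^k * ((ν:ℝ)+1)^k) * rr ^ ν := by
        apply mul_le_mul hnum hinv (by positivity) (by positivity)
    _ = ((a:ℝ)+1)^k * (((ν:ℝ)+1)^k * rr ^ ν) := by ring

lemma nat_le_totient_mul (d : ℕ) (hd : 0 < d) :
    d ≤ 2 ^ d.primeFactors.card * d.totient := by
  have key := Nat.totient_mul_prod_primeFactors d
  have hY : (∏ p ∈ d.primeFactors, p) ≤ 2 ^ d.primeFactors.card * ∏ p ∈ d.primeFactors, (p - 1) := by
    calc (∏ p ∈ d.primeFactors, p) ≤ ∏ p ∈ d.primeFactors, 2 * (p - 1) := by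
          apply Finset.prod_le_prod' -- maybe wrong name
          intro p hp
          have := (Nat.prime_of_mem_primeFactors hp).two_le
          omega
      _ = 2 ^ d.primeFactors.card * ∏ p ∈ d.primeFactors, (p - 1) := by
          rw [Finset.prod_mul_distrib, Finset.prod_const]
  have hX : 0 < ∏ p ∈ d.primeFactors, (p - 1) := by
    apply Finset.prod_pos
    intro p hp
    have := (Nat.prime_of_mem_primeFactors hp).two_le
    omega
  have : d * (∏ p ∈ d.primeFactors, (p - 1))
      ≤ (2 ^ d.primeFactors.card * d.totient) * ∏ p ∈ d.primeFactors, (p - 1) := by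
    calc d * (∏ p ∈ d.primeFactors, (p - 1)) = d.totient * ∏ p ∈ d.primeFactors, p := key.symm
      _ ≤ d.totient * (2 ^ d.primeFactors.card * ∏ p ∈ d.primeFactors, (p - 1)) :=
          Nat.mul_le_mul_left _ hY
      _ = (2 ^ d.primeFactors.card * d.totient) * ∏ p ∈ d.primeFactors, (p - 1) := by ring
  exact Nat.le_of_mul_le_mul_right this hX

/-- For `Re s > 1/2` and `e ∣ d ∣ q`, `Ψ_{d,e}(s,q,k) ≪_{k,ε} q^{ε/2}`. -/
theorem Psi_bound (k : ℕ) (hk : 2 ≤ k) (ε : ℝ) (hε : 0 < ε) :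
    ∃ C : ℝ, 0 < C ∧ ∀ q d e : ℕ, 0 < q → d ∣ q → e ∣ d → ∀ s : ℂ, 1 / 2 < s.re →
      ‖Psi k q d e s‖ ≤ C * (q : ℝ) ^ (ε / 2) := by
  set δ : ℝ := ε / 6 with hδdef
  have hδ : 0 < δ := by positivity
  obtain ⟨C5, hC5, h5⟩ := poly_bound k δ hδ
  set A : ℝ := 2 ^ k * Bk k * C5 with hA
  have hA1 : 1 ≤ A := by
    have h1 : (1:ℝ) ≤ 2 ^ k := one_le_pow₀ (by norm_num)
    have h2 := one_le_Bk k
    rw [hA]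
    calc (1:ℝ) = 1 * 1 * 1 := by norm_num
      _ ≤ 2 ^ k * Bk k * C5 :=
          mul_le_mul (mul_le_mul h1 h2 zero_le_one (by positivity)) hC5 zero_le_one
            (by positivity)
  obtain ⟨C4, hC4, h4⟩ := omega_bound A δ hA1 hδ
  obtain ⟨C2, hC2, h2⟩ := omega_bound 2 δ (by norm_num) hδ
  refine ⟨C2 * C4, by positivity, fun q d e hq hdq hed s hs => ?_⟩
  have hd0 : 0 < d := Nat.pos_of_dvd_of_pos hdq hq
  have he0 : 0 < e := Nat.pos_of_dvd_of_pos hed hd0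
  have hq0 : (0:ℝ) < (q:ℝ) := by exact_mod_cast hq
  have hrhs : (0:ℝ) < C2 * C4 * (q:ℝ) ^ (ε/2) := by positivity
  -- trivial case: vanishing Möbius factor
  rcases eq_or_ne (ArithmeticFunction.moebius d) 0 with hmd | hmd
  · rw [Psi, hmd]
    simp only [Int.cast_zero, mul_zero, zero_mul, zero_div, norm_zero]
    exact hrhs.le
  rcases eq_or_ne (ArithmeticFunction.moebius e) 0 with hme | hme
  · rw [Psi, hme]
    simp only [Int.cast_zero, mul_zero, zero_div, zero_mul, norm_zero]
    exact hrhs.le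
  -- setup for m = e q / d
  set m : ℕ := e * q / d with hm
  have hdeq : d ∣ e * q := Dvd.dvd.mul_left hdq e
  have hm0 : 0 < m := Nat.div_pos (Nat.le_of_dvd (by positivity) hdeq) hd0
  have hmq : m ≤ q := by
    have h1 : e * q ≤ d * q := Nat.mul_le_mul_right q (Nat.le_of_dvd hd0 hed)
    calc m ≤ d * q / d := Nat.div_le_div_right h1
      _ = q := Nat.mul_div_cancel_left q hd0
  have hdq' : d ≤ q := Nat.le_of_dvd hq hdq
  -- norm of the prefactor
  have hnorm_md : ‖((ArithmeticFunction.moebius d : ℤ) : ℂ)‖ = 1 := by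
    rcases ArithmeticFunction.moebius_ne_zero_iff_eq_or.mp hmd with h | h <;> simp [h]
  have hnorm_me : ‖((ArithmeticFunction.moebius e : ℤ) : ℂ)‖ = 1 := by
    rcases ArithmeticFunction.moebius_ne_zero_iff_eq_or.mp hme with h | h <;> simp [h]
  have hφ0 : 0 < d.totient := Nat.totient_pos.mpr hd0
  have hpref : ‖((d : ℂ) * (ArithmeticFunction.moebius d : ℤ) * (ArithmeticFunction.moebius e : ℤ)) /
      ((Nat.totient d : ℂ) * (e : ℂ))‖ = (d:ℝ) / ((d.totient : ℝ) * e) := by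
    rw [norm_div, norm_mul, norm_mul, norm_mul, hnorm_md, hnorm_me,
      Complex.norm_natCast, Complex.norm_natCast, Complex.norm_natCast]
    ring
  -- bound each local factor
  have hfac : ∀ p ∈ m.primeFactors,
      ‖(1 - (p : ℂ) ^ (-s)) ^ k *
        ∑' ν : ℕ, (dk k (p ^ (ν + m.factorization p)) : ℂ) / (p : ℂ) ^ ((ν : ℂ) * s)‖
      ≤ A * (p:ℝ) ^ (δ * (m.factorization p : ℝ)) := by
    intro p hp
    have hpp := Nat.prime_of_mem_primeFactors hp
    have hp2 : (2:ℝ) ≤ (p:ℝ) := by exact_mod_cast hpp.two_le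
    have hσ : (0:ℝ) < s.re := lt_trans (by norm_num) hs
    have h1ps : ‖(1 - (p : ℂ) ^ (-s))‖ ≤ 2 := by
      calc ‖(1 - (p : ℂ) ^ (-s))‖ ≤ ‖(1:ℂ)‖ + ‖(p : ℂ) ^ (-s)‖ := norm_sub_le _ _
        _ ≤ 1 + 1 := by
            rw [norm_one]
            apply add_le_add le_rfl
            rw [Complex.norm_natCast_cpow_of_pos hpp.pos]
            apply Real.rpow_le_one_of_one_le_of_nonpos (by exact_mod_cast hpp.one_lt.le)
            simp [hσ.le]
        _ = 2 := by norm_num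
    set a := m.factorization p with ha
    have htsum := tsum_factor_bound k a hpp hs
    have hpoly : ((a:ℝ)+1)^k ≤ C5 * (p:ℝ) ^ (δ * (a:ℝ)) := by
      refine (h5 a).trans ?_
      apply mul_le_mul_of_nonneg_left _ (by linarith)
      exact Real.rpow_le_rpow (by norm_num) hp2 (by positivity)
    calc ‖(1 - (p : ℂ) ^ (-s)) ^ k * ∑' ν : ℕ, (dk k (p ^ (ν + a)) : ℂ) / (p : ℂ) ^ ((ν : ℂ) * s)‖
        = ‖(1 - (p : ℂ) ^ (-s))‖ ^ k * ‖∑' ν : ℕ, (dk k (p ^ (ν + a)) : ℂ) / (p : ℂ) ^ ((ν : ℂ) * s)‖ := by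
          rw [norm_mul, norm_pow]
      _ ≤ 2 ^ k * (((a:ℝ)+1)^k * Bk k) := by
          apply mul_le_mul (pow_le_pow_left₀ (norm_nonneg _) h1ps k) htsum (norm_nonneg _)
            (by positivity)
      _ ≤ 2 ^ k * ((C5 * (p:ℝ) ^ (δ * (a:ℝ))) * Bk k) := by
          have hBk0 : (0:ℝ) ≤ Bk k := le_trans zero_le_one (one_le_Bk k)
          apply mul_le_mul_of_nonneg_left _ (by positivity)
          exact mul_le_mul_of_nonneg_right hpoly hBk0
      _ = A * (p:ℝ) ^ (δ * (a:ℝ)) := by rw [hA]; ring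
  -- product bound
  have hprod : ∏ p ∈ m.primeFactors, (A * (p:ℝ) ^ (δ * (m.factorization p : ℝ)))
      = A ^ m.primeFactors.card * ∏ p ∈ m.primeFactors, (p:ℝ) ^ (δ * (m.factorization p : ℝ)) := by
    rw [Finset.prod_mul_distrib, Finset.prod_const]
  have hmfac : ∏ p ∈ m.primeFactors, (p:ℝ) ^ (δ * (m.factorization p : ℝ)) = (m:ℝ) ^ δ := by
    have hfac_eq : ∏ p ∈ m.primeFactors, p ^ m.factorization p = m := by
      rw [← Nat.support_factorization]
      exact Nat.factorization_prod_pow_eq_self hm0.ne'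
    calc ∏ p ∈ m.primeFactors, (p:ℝ) ^ (δ * (m.factorization p : ℝ))
        = ∏ p ∈ m.primeFactors, ((p:ℝ) ^ (m.factorization p : ℕ)) ^ δ := by
          refine Finset.prod_congr rfl fun p hp => ?_
          have hppos : (0:ℝ) < (p:ℝ) := by
            exact_mod_cast (Nat.prime_of_mem_primeFactors hp).pos
          rw [← Real.rpow_natCast ((p:ℝ)) (m.factorization p), ← Real.rpow_mul hppos.le,
            mul_comm]
      _ = (∏ p ∈ m.primeFactors, (p:ℝ) ^ (m.factorization p : ℕ)) ^ δ := by
          rw [Real.finset_prod_rpow _ _ (fun p _ => by positivity)]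
      _ = (m:ℝ) ^ δ := by
          congr 1
          exact_mod_cast hfac_eq
  -- totient bound
  have htot : (d:ℝ) / ((d.totient : ℝ) * e) ≤ C2 * (q:ℝ) ^ δ := by
    have h1 : (d:ℝ) ≤ 2 ^ d.primeFactors.card * d.totient := by
      exact_mod_cast nat_le_totient_mul d hd0
    have he1 : (1:ℝ) ≤ (e:ℝ) := by exact_mod_cast he0
    have hφ0' : (0:ℝ) < (d.totient:ℝ) := by exact_mod_cast hφ0
    have hstep : (d:ℝ) / ((d.totient : ℝ) * e) ≤ (2:ℝ) ^ d.primeFactors.card := by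
      rw [div_le_iff₀ (by positivity)]
      calc (d:ℝ) ≤ 2 ^ d.primeFactors.card * d.totient := h1
        _ ≤ 2 ^ d.primeFactors.card * ((d.totient:ℝ) * e) := by
            rw [mul_le_mul_iff_right₀ (by positivity)]
            nlinarith
    refine hstep.trans ?_
    calc (2:ℝ) ^ d.primeFactors.card ≤ C2 * (d:ℝ) ^ δ := h2 d hd0
      _ ≤ C2 * (q:ℝ) ^ δ := by
          apply mul_le_mul_of_nonneg_left _ (by linarith)
          exact Real.rpow_le_rpow (by positivity) (by exact_mod_cast hdq') hδ.le
  -- assemble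
  rw [Psi, norm_mul, hpref, norm_prod]
  have hω : A ^ m.primeFactors.card ≤ C4 * (m:ℝ) ^ δ := h4 m hm0
  have hm_le : ((m:ℝ)) ^ δ ≤ (q:ℝ) ^ δ :=
    Real.rpow_le_rpow (by positivity) (by exact_mod_cast hmq) hδ.le
  have hprod_le : ∏ p ∈ m.primeFactors,
      ‖(1 - (p : ℂ) ^ (-s)) ^ k *
        ∑' ν : ℕ, (dk k (p ^ (ν + m.factorization p)) : ℂ) / (p : ℂ) ^ ((ν : ℂ) * s)‖
      ≤ C4 * (q:ℝ) ^ δ * (q:ℝ) ^ δ := by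
    calc ∏ p ∈ m.primeFactors, ‖(1 - (p : ℂ) ^ (-s)) ^ k *
          ∑' ν : ℕ, (dk k (p ^ (ν + m.factorization p)) : ℂ) / (p : ℂ) ^ ((ν : ℂ) * s)‖
        ≤ ∏ p ∈ m.primeFactors, (A * (p:ℝ) ^ (δ * (m.factorization p : ℝ))) :=
          Finset.prod_le_prod (fun _ _ => norm_nonneg _) hfac
      _ = A ^ m.primeFactors.card * (m:ℝ) ^ δ := by rw [hprod, hmfac]
      _ ≤ (C4 * (m:ℝ) ^ δ) * (m:ℝ) ^ δ := by
          apply mul_le_mul_of_nonneg_right hω (by positivity)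
      _ ≤ C4 * (q:ℝ) ^ δ * (q:ℝ) ^ δ := by
          have h0 : (0:ℝ) ≤ (m:ℝ) ^ δ := by positivity
          have hC4' : (0:ℝ) ≤ C4 := by linarith
          apply mul_le_mul (by nlinarith) hm_le h0 (by positivity)
  calc (d:ℝ) / ((d.totient : ℝ) * e) * ∏ p ∈ m.primeFactors,
        ‖(1 - (p : ℂ) ^ (-s)) ^ k *
          ∑' ν : ℕ, (dk k (p ^ (ν + m.factorization p)) : ℂ) / (p : ℂ) ^ ((ν : ℂ) * s)‖
      ≤ (C2 * (q:ℝ) ^ δ) * (C4 * (q:ℝ) ^ δ * (q:ℝ) ^ δ) := by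
        apply mul_le_mul htot hprod_le
          (Finset.prod_nonneg fun _ _ => norm_nonneg _) (by positivity)
    _ = C2 * C4 * ((q:ℝ) ^ δ * (q:ℝ) ^ δ * (q:ℝ) ^ δ) := by ring
    _ = C2 * C4 * (q:ℝ) ^ (ε/2) := by
        rw [← Real.rpow_add hq0, ← Real.rpow_add hq0]
        congr 1
        rw [hδdef]
        ring
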